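/- Let p ≥ 3 be an odd integer and k = p/2 − 3. Then the map (i,j) ↦ (ξ_{i,j}, χ_{i,j}) is injective on the set {(i,j) ∈ ℤ² : 1 ≤ i ≤ p−2 and 1 ≤ j ≤ p−i−1}. -/

import Mathlib

/-- `ξ_{i,j} = (−2i − j + 2k + 6)/3`, with integer indices. -/
noncomputable def xiBP (k : ℝ) (i j : ℤ) : ℝ := (-2 * (i : ℝ) - j + 2 * k + 6) / 3

/-- `χ_{i,j} = (i² + ji − ki − 3i + j² − 6j − 2jk + 3k + 6)/(3(k+3))`, with integer indices. -/
noncomputable def chiBP (k : ℝ) (i j : ℤ) : ℝ :=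
  ((i : ℝ) ^ 2 + j * i - k * i - 3 * i + (j : ℝ) ^ 2 - 6 * j - 2 * j * k + 3 * k + 6)
    / (3 * (k + 3))

/-- Let `p ≥ 3` be an odd integer and `k = p/2 − 3`. Then `(i,j) ↦ (ξ_{i,j}, χ_{i,j})`
is injective on `{(i,j) ∈ ℤ² : 1 ≤ i ≤ p−2, 1 ≤ j ≤ p−i−1}`. -/
theorem injOn_xiBP_chiBP (p : ℤ) (hp3 : 3 ≤ p) (hodd : Odd p)
    (k : ℝ) (hk : k = (p : ℝ) / 2 - 3) :
    Set.InjOn (fun q : ℤ × ℤ => (xiBP k q.1 q.2, chiBP k q.1 q.2))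
      {q : ℤ × ℤ | 1 ≤ q.1 ∧ q.1 ≤ p - 2 ∧ 1 ≤ q.2 ∧ q.2 ≤ p - q.1 - 1} := by
  have hpR : (3 : ℝ) ≤ (p : ℝ) := by exact_mod_cast hp3
  have hk3 : k + 3 = (p : ℝ) / 2 := by rw [hk]; ring
  have hkne : 3 * (k + 3) ≠ 0 := by
    rw [hk3]; positivity
  rintro ⟨i, j⟩ _ ⟨i', j'⟩ _ h
  simp only [Prod.mk.injEq] at h
  obtain ⟨h1, h2⟩ := h
  unfold xiBP at h1
  unfold chiBP at h2
  have e1 : 2 * (i : ℝ) + j = 2 * (i' : ℝ) + j' := by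
    field_simp at h1; linarith
  have e2 : (i : ℝ) ^ 2 + j * i - k * i - 3 * i + (j : ℝ) ^ 2 - 6 * j - 2 * j * k
      = (i' : ℝ) ^ 2 + j' * i' - k * i' - 3 * i' + (j' : ℝ) ^ 2 - 6 * j' - 2 * j' * k := by
    rw [div_left_inj' hkne] at h2; linarith
  have key : ((i : ℝ) - i') * ((i : ℝ) + i' - (2 * i + j) + (p : ℝ) / 2) = 0 := by
    subst hk
    linear_combination e2 / 3 + ((i' : ℝ) - (2 * (2 * (i:ℝ) + j)
      - ((2 * (i:ℝ) + j) - (2 * (i':ℝ) + j')) - 6 - 2 * ((p:ℝ)/2 - 3)) / 3) * e1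
  rcases mul_eq_zero.1 key with h0 | h0
  · have hii : i = i' := by
      have : (i : ℝ) = i' := by linarith
      exact_mod_cast this
    subst hii
    have : (j : ℝ) = j' := by linarith
    have : j = j' := by exact_mod_cast this
    simp [this]
  · exfalso
    have : ((2 * i + j - i - i' : ℤ) : ℝ) = (p : ℝ) / 2 := by push_cast; linarith
    have hpe : (p : ℝ) = ((2 * (2 * i + j - i - i') : ℤ) : ℝ) := by push_cast at this ⊢; linarith
    have hpeq : p = 2 * (2 * i + j - i - i') := by exact_mod_cast hpe
    have : Even p := ⟨2 * i + j - i - i', by omega⟩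
    exact (Int.not_even_iff_odd.2 hodd) this
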